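/- Let A be a commutative ring and (a₁, …, a_d) a regular sequence. Let B = A[x₁, …, x_{d−1}]/(aᵢ − a_d xᵢ for 1 ≤ i ≤ d−1), and consider the B-module map φ: B^d → B sending the i-th standard basis vector Tᵢ to aᵢ (where x_d is interpreted as 1, i.e. T_d ↦ a_d). Then the kernel of φ is the B-submodule generated by the elements Tᵢ − xᵢ·T_d for 1 ≤ i ≤ d−1. -/

import Mathlib

open RingTheory.Sequence

/-- The set of Koszul relations among `r : Fin n → R` inside `Fin n → R`. -/
def koszulSet {R : Type*} [CommRing R] {n : ℕ} (r : Fin n → R) : Set (Fin n → R) :=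
  Set.range fun p : Fin n × Fin n =>
    r p.2 • (Pi.single p.1 1 : Fin n → R) - r p.1 • (Pi.single p.2 1 : Fin n → R)

/-- Extension by zero as a linear map. -/
def extLast {R : Type*} [CommRing R] (n : ℕ) : (Fin n → R) →ₗ[R] (Fin (n+1) → R) where
  toFun v := Fin.snoc v 0
  map_add' u v := funext fun j => Fin.lastCases (by simp) (fun i => by simp) j
  map_smul' c v := funext fun j => Fin.lastCases (by simp) (fun i => by simp) j

lemma snoc_single {R : Type*} [CommRing R] {n : ℕ} (i : Fin n) (x : R) :
    (Fin.snoc (Pi.single i x) 0 : Fin (n+1) → R) = Pi.single i.castSucc x := by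
  funext j
  refine Fin.lastCases ?_ (fun k => ?_) j
  · simp [Pi.single_eq_of_ne (Fin.castSucc_lt_last i).ne']
  · rw [Fin.snoc_castSucc]
    simp [Pi.single_apply, Fin.castSucc_inj]

/-- Relations among a weakly regular sequence are generated by the Koszul relations. -/
theorem koszul_relations {R : Type*} [CommRing R] :
    ∀ (n : ℕ) (r : Fin n → R), IsWeaklyRegular R (List.ofFn r) →
      ∀ b : Fin n → R, (∑ i, b i * r i) = 0 →
      b ∈ Submodule.span R (koszulSet r) := by
  intro n
  induction n with
  | zero =>
    intro r _ b _
    have hb : b = 0 := funext fun i => i.elim0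
    rw [hb]
    exact Submodule.zero_mem _
  | succ n ih =>
    intro r hreg b hb
    have hofn : List.ofFn r = List.ofFn (fun i : Fin n => r i.castSucc) ++ [r (Fin.last n)] := by
      rw [List.ofFn_succ' r, List.concat_eq_append]
    rw [hofn, isWeaklyRegular_append_iff] at hreg
    have hpre := hreg.1
    have hsr' : IsSMulRegular
        (R ⧸ (Ideal.ofList (List.ofFn fun i : Fin n => r i.castSucc) • ⊤ : Submodule R R))
        (r (Fin.last n)) :=
      ((isWeaklyRegular_cons_iff _ _ _).mp hreg.2).1
    set J : Ideal R := Ideal.ofList (List.ofFn fun i : Fin n => r i.castSucc) with hJ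
    have hJr : J = Ideal.span (Set.range fun i : Fin n => r i.castSucc) := by
      rw [hJ]
      have hset : {x : R | x ∈ List.ofFn (fun i : Fin n => r i.castSucc)}
          = Set.range (fun i : Fin n => r i.castSucc) :=
        Set.ext fun x => List.mem_ofFn
      show Ideal.span _ = _
      rw [hset]
    rw [Fin.sum_univ_castSucc] at hb
    have hmem : r (Fin.last n) * b (Fin.last n) ∈ J := by
      have h1 : r (Fin.last n) * b (Fin.last n) = -∑ i : Fin n, b i.castSucc * r i.castSucc := by
        rw [mul_comm]; exact eq_neg_of_add_eq_zero_right hb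
      rw [h1]
      exact neg_mem (Submodule.sum_mem _ fun i _ => by
        rw [hJr]
        exact Ideal.mul_mem_left _ _ (Ideal.subset_span ⟨i, rfl⟩))
    have hb_last : b (Fin.last n) ∈ J := by
      have h0 : (r (Fin.last n)) • (Submodule.Quotient.mk (b (Fin.last n)) :
          R ⧸ (J • ⊤ : Submodule R R)) = r (Fin.last n) • (0 : R ⧸ (J • ⊤ : Submodule R R)) := by
        rw [smul_zero, ← Submodule.Quotient.mk_smul, Submodule.Quotient.mk_eq_zero]
        have : r (Fin.last n) • b (Fin.last n) = (r (Fin.last n) * b (Fin.last n)) • (1:R) := by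
          rw [smul_eq_mul, smul_eq_mul, mul_one]
        rw [this]
        exact Submodule.smul_mem_smul hmem Submodule.mem_top
      have h2 := hsr' h0
      rw [Submodule.Quotient.mk_eq_zero] at h2
      have hle : (J • ⊤ : Submodule R R) ≤ (J : Submodule R R) :=
        Submodule.smul_le.mpr fun j hj m _ => by
          rw [smul_eq_mul]; exact J.mul_mem_right m hj
      exact hle h2
    have hbl2 : b (Fin.last n) ∈ Ideal.span (Set.range fun i : Fin n => r i.castSucc) := by
      rw [← hJr]; exact hb_last
    obtain ⟨c, hc⟩ : ∃ c : Fin n → R, ∑ i, c i • r i.castSucc = b (Fin.last n) :=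
      (Submodule.mem_span_range_iff_exists_fun R).mp hbl2
    set b' : Fin n → R := fun i => b i.castSucc + c i * r (Fin.last n) with hb'def
    have hb' : (∑ i, b' i * r i.castSucc) = 0 := by
      have e1 : (∑ i, b' i * r i.castSucc)
          = (∑ i : Fin n, b i.castSucc * r i.castSucc) + (∑ i, c i • r i.castSucc) * r (Fin.last n) := by
        rw [Finset.sum_mul, ← Finset.sum_add_distrib]
        exact Finset.sum_congr rfl fun i _ => by simp [hb'def, smul_eq_mul]; ring
      rw [e1, hc]
      exact hb
    have hmem' := ih _ hpre b' hb'
    have h1 : (Fin.snoc b' 0 : Fin (n+1) → R) ∈ Submodule.span R (koszulSet r) := by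
      have h2 : extLast n b' ∈ Submodule.map (extLast n)
          (Submodule.span R (koszulSet (fun i : Fin n => r i.castSucc))) :=
        Submodule.mem_map_of_mem hmem'
      rw [Submodule.map_span] at h2
      refine Submodule.span_mono ?_ h2
      rintro _ ⟨_, ⟨p, rfl⟩, rfl⟩
      refine ⟨(p.1.castSucc, p.2.castSucc), ?_⟩
      rw [map_sub, map_smul, map_smul]
      show _ = _ • (Fin.snoc (Pi.single p.1 (1:R)) 0 : Fin (n+1) → R)
          - _ • (Fin.snoc (Pi.single p.2 (1:R)) 0 : Fin (n+1) → R)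
      rw [snoc_single, snoc_single]
    have hfin : b = (Fin.snoc b' 0 : Fin (n+1) → R) + ∑ i : Fin n,
        c i • (r i.castSucc • (Pi.single (Fin.last n) (1:R) : Fin (n+1) → R)
          - r (Fin.last n) • (Pi.single i.castSucc (1:R) : Fin (n+1) → R)) := by
      funext j
      refine Fin.lastCases ?_ (fun k => ?_) j
      · simp only [Pi.add_apply, Fin.snoc_last, Finset.sum_apply, Pi.smul_apply, Pi.sub_apply,
          Pi.single_eq_same, smul_eq_mul]
        have : ∀ i : Fin n, (Pi.single i.castSucc (1:R) : Fin (n+1) → R) (Fin.last n) = 0 :=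
          fun i => Pi.single_eq_of_ne (Fin.castSucc_lt_last i).ne' _
        simp only [this, mul_zero, mul_one, sub_zero, zero_add]
        rw [← hc]
        exact (Finset.sum_congr rfl fun i _ => by rw [smul_eq_mul]).symm
      · simp only [Pi.add_apply, Fin.snoc_castSucc, Finset.sum_apply, Pi.smul_apply, Pi.sub_apply,
          smul_eq_mul, hb'def]
        have h3 : (Pi.single (Fin.last n) (1:R) : Fin (n+1) → R) k.castSucc = 0 :=
          Pi.single_eq_of_ne (Fin.castSucc_lt_last k).ne _
        have h4 : ∀ i : Fin n, (Pi.single i.castSucc (1:R) : Fin (n+1) → R) k.castSucc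
            = if k = i then 1 else 0 := fun i => by
          rw [Pi.single_apply]
          simp [Fin.castSucc_inj, eq_comm]
        simp only [h3, h4, mul_zero, zero_sub, mul_neg, mul_ite, neg_zero,
          Finset.sum_neg_distrib, Finset.sum_ite_eq, Finset.mem_univ, if_true]
        ring
    rw [hfin]
    exact Submodule.add_mem _ h1 (Submodule.sum_mem _ fun i _ =>
      Submodule.smul_mem _ _ (Submodule.subset_span ⟨(Fin.last n, i.castSucc), rfl⟩))
open MvPolynomial in
/-- Componentwise `C` as an `A`-linear map. -/
noncomputable def cVec (A : Type*) [CommRing A] (σ : Type*) (n : ℕ) :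
    (Fin n → A) →ₗ[A] (Fin n → MvPolynomial σ A) where
  toFun c i := C (c i)
  map_add' u v := funext fun i => by simp
  map_smul' a v := funext fun i => by simp [MvPolynomial.smul_eq_C_mul]

open MvPolynomial in
lemma cVec_single {A : Type*} [CommRing A] {σ : Type*} {n : ℕ} (j : Fin n) (x : A) :
    cVec A σ n (Pi.single j x) = Pi.single j (C x) := by
  funext i
  simp only [cVec, LinearMap.coe_mk, AddHom.coe_mk, Pi.single_apply]
  split <;> simp

open MvPolynomial in
/-- Koszul relations generate the relations among constants in a polynomial ring. -/
theorem koszul_relations_poly {A : Type*} [CommRing A] {σ : Type*} (n : ℕ) (a : Fin n → A)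
    (hreg : RingTheory.Sequence.IsWeaklyRegular A (List.ofFn a))
    (F : Fin n → MvPolynomial σ A) (hF : (∑ i, F i * C (a i)) = 0) :
    F ∈ Submodule.span (MvPolynomial σ A) (koszulSet (fun i => (C (a i) : MvPolynomial σ A))) := by
  classical
  set S : Finset (σ →₀ ℕ) := Finset.univ.biUnion (fun i => (F i).support) with hS
  have hdecomp : F = ∑ m ∈ S, (fun i => (monomial m) (coeff m (F i))) := by
    funext i
    rw [Finset.sum_apply]
    calc F i = ∑ m ∈ (F i).support, (monomial m) (coeff m (F i)) := as_sum (F i)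
      _ = ∑ m ∈ S, (monomial m) (coeff m (F i)) := by
          refine Finset.sum_subset (fun m hm => Finset.mem_biUnion.mpr ⟨i, Finset.mem_univ i, hm⟩)
            (fun m _ hm => ?_)
          rw [notMem_support_iff.mp hm, map_zero]
  rw [hdecomp]
  refine Submodule.sum_mem _ fun m _ => ?_
  have hrel : (∑ i, coeff m (F i) * a i) = 0 := by
    have h := congrArg (coeff m) hF
    rw [coeff_sum] at h
    simp only [coeff_zero] at h
    rw [← h]
    exact Finset.sum_congr rfl fun i _ => by
      rw [mul_comm (F i) (C (a i)), coeff_C_mul, mul_comm]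
  have hb := koszul_relations n a hreg _ hrel
  have h2 : cVec A σ n (fun i => coeff m (F i)) ∈
      Submodule.map (cVec A σ n) (Submodule.span A (koszulSet a)) :=
    Submodule.mem_map_of_mem hb
  rw [Submodule.map_span] at h2
  have himg : (cVec A σ n) '' (koszulSet a) ⊆ koszulSet (fun i => (C (a i) : MvPolynomial σ A)) := by
    rintro _ ⟨_, ⟨p, rfl⟩, rfl⟩
    refine ⟨p, ?_⟩
    rw [map_sub, map_smul, map_smul, cVec_single, cVec_single]
    have e : ∀ (j k : Fin n), a j • (Pi.single k (C (1:A)) : Fin n → MvPolynomial σ A)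
        = (C (a j) : MvPolynomial σ A) • (Pi.single k 1 : Fin n → MvPolynomial σ A) := by
      intro j k
      funext i
      simp only [Pi.smul_apply, Pi.single_apply]
      split <;> simp [MvPolynomial.smul_eq_C_mul]
    rw [e, e]
  have h3 : cVec A σ n (fun i => coeff m (F i)) ∈
      Submodule.span (MvPolynomial σ A) (koszulSet (fun i => (C (a i) : MvPolynomial σ A))) := by
    have := Submodule.span_mono himg h2
    exact Submodule.span_le_restrictScalars A (MvPolynomial σ A) _ this
  have h4 : (fun i => (monomial m) (coeff m (F i)))
      = (monomial m 1 : MvPolynomial σ A) • cVec A σ n (fun i => coeff m (F i)) := by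
    funext i
    simp only [Pi.smul_apply, cVec, LinearMap.coe_mk, AddHom.coe_mk, smul_eq_mul]
    rw [C_apply, monomial_mul, add_zero, one_mul]
  rw [h4]
  exact Submodule.smul_mem _ _ h3
open MvPolynomial

/-- Componentwise quotient map as a linear map. -/
noncomputable def quotMap {R : Type*} [CommRing R] (I : Ideal R) (n : ℕ) :
    (Fin n → R) →ₗ[R] (Fin n → R ⧸ I) :=
  LinearMap.compLeft (Algebra.linearMap R (R ⧸ I)) (Fin n)

lemma quotMap_apply {R : Type*} [CommRing R] (I : Ideal R) (n : ℕ) (v : Fin n → R) (i : Fin n) :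
    quotMap I n v i = Ideal.Quotient.mk I (v i) := rfl

lemma quotMap_single {R : Type*} [CommRing R] (I : Ideal R) (n : ℕ) (k : Fin n) :
    quotMap I n (Pi.single k 1) = (Pi.single k 1 : Fin n → R ⧸ I) := by
  funext i
  rw [quotMap_apply, Pi.single_apply, Pi.single_apply]
  split <;> simp

set_option maxHeartbeats 2000000 in
set_option synthInstance.maxHeartbeats 400000 in
/-- Kernel of the map `B^{d+1} → B`, `Tᵢ ↦ aᵢ`, on the blow-up chart
`B = A[x₁,…,x_d]/(aᵢ - a_{d+1} xᵢ)`: it is generated by the elements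
`Tᵢ - xᵢ·T_{d+1}`. -/
theorem stmt2 (A : Type*) [CommRing A] (d : ℕ) (a : Fin (d + 1) → A)
    (hreg : RingTheory.Sequence.IsRegular A (List.ofFn a))
    (I : Ideal (MvPolynomial (Fin d) A))
    (hI : I = Ideal.span (Set.range fun i : Fin d =>
      C (a i.castSucc) - C (a (Fin.last d)) * X i)) :
    LinearMap.ker
        (Fintype.linearCombination (MvPolynomial (Fin d) A ⧸ I)
          (fun i : Fin (d + 1) => Ideal.Quotient.mk I (C (a i)))) =
      Submodule.span (MvPolynomial (Fin d) A ⧸ I)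
        (Set.range fun i : Fin d =>
          (Pi.single i.castSucc 1 : Fin (d + 1) → MvPolynomial (Fin d) A ⧸ I) -
          Ideal.Quotient.mk I (X i) •
            (Pi.single (Fin.last d) 1 : Fin (d + 1) → MvPolynomial (Fin d) A ⧸ I)) := by
  classical
  apply le_antisymm
  · -- ker ⊆ span
    intro v hv
    rw [LinearMap.mem_ker, Fintype.linearCombination_apply] at hv
    choose f hf using fun i => Ideal.Quotient.mk_surjective (v i)
    have hIm : (∑ i, f i * C (a i)) ∈ I := by
      rw [← Ideal.Quotient.eq_zero_iff_mem, map_sum, ← hv]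
      exact Finset.sum_congr rfl fun i _ => by rw [map_mul, hf, smul_eq_mul]
    rw [hI] at hIm
    obtain ⟨g, hg⟩ := (Submodule.mem_span_range_iff_exists_fun _).mp hIm
    set F : Fin (d+1) → MvPolynomial (Fin d) A :=
      Fin.snoc (fun j => f j.castSucc - g j) (f (Fin.last d) + ∑ j, g j * X j) with hFdef
    have hF : (∑ i, F i * C (a i)) = 0 := by
      rw [Fin.sum_univ_castSucc]
      simp only [hFdef, Fin.snoc_castSucc, Fin.snoc_last]
      have e1 : ∑ j : Fin d, (f j.castSucc - g j) * C (a j.castSucc)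
          = (∑ j : Fin d, f j.castSucc * C (a j.castSucc))
            - ∑ j : Fin d, g j * C (a j.castSucc) := by
        rw [← Finset.sum_sub_distrib]
        exact Finset.sum_congr rfl fun j _ => by ring
      have e2 : (f (Fin.last d) + ∑ j, g j * X j) * C (a (Fin.last d))
          = f (Fin.last d) * C (a (Fin.last d))
            + ∑ j : Fin d, g j * (C (a (Fin.last d)) * X j) := by
        rw [add_mul, Finset.sum_mul]
        congr 1
        exact Finset.sum_congr rfl fun j _ => by ring
      have e3 : ∑ j : Fin d, g j • (C (a j.castSucc) - C (a (Fin.last d)) * X j)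
          = (∑ j : Fin d, g j * C (a j.castSucc))
            - ∑ j : Fin d, g j * (C (a (Fin.last d)) * X j) := by
        rw [← Finset.sum_sub_distrib]
        exact Finset.sum_congr rfl fun j _ => by rw [smul_eq_mul]; ring
      rw [e1, e2]
      rw [Fin.sum_univ_castSucc (fun i => f i * C (a i)), e3] at hg
      linear_combination -hg
    have hFloc := koszul_relations_poly (d+1) a hreg.toIsWeaklyRegular F hF
    -- auxiliary elements
    set xb : Fin (d+1) → MvPolynomial (Fin d) A ⧸ I :=
      Fin.snoc (fun j : Fin d => Ideal.Quotient.mk I (X j)) 1 with hxb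
    have hax : ∀ i, Ideal.Quotient.mk I (C (a i))
        = Ideal.Quotient.mk I (C (a (Fin.last d))) * xb i := by
      refine Fin.lastCases ?_ (fun j => ?_)
      · simp [hxb, Fin.snoc_last]
      · rw [hxb]
        simp only [Fin.snoc_castSucc]
        rw [← map_mul, Ideal.Quotient.eq]
        exact hI ▸ Ideal.subset_span ⟨j, rfl⟩
    set T : Set (Fin (d+1) → MvPolynomial (Fin d) A ⧸ I) := Set.range fun i : Fin d =>
        (Pi.single i.castSucc 1 : Fin (d+1) → MvPolynomial (Fin d) A ⧸ I) -
          Ideal.Quotient.mk I (X i) •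
            (Pi.single (Fin.last d) 1 : Fin (d+1) → MvPolynomial (Fin d) A ⧸ I) with hT
    set τ : Fin (d+1) → (Fin (d+1) → MvPolynomial (Fin d) A ⧸ I) := fun i =>
      (Pi.single i 1 : Fin (d+1) → MvPolynomial (Fin d) A ⧸ I) -
        xb i • (Pi.single (Fin.last d) 1 : Fin (d+1) → MvPolynomial (Fin d) A ⧸ I)
      with hτdef
    have hτ : ∀ i, τ i ∈ Submodule.span (MvPolynomial (Fin d) A ⧸ I) T := by
      refine Fin.lastCases ?_ (fun j => ?_)
      · have : τ (Fin.last d) = 0 := by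
          simp [hτdef, hxb, Fin.snoc_last]
        rw [this]; exact Submodule.zero_mem _
      · refine Submodule.subset_span ⟨j, ?_⟩
        simp [hτdef, hxb, Fin.snoc_castSucc]
    have hκ : ∀ i j : Fin (d+1),
        (Ideal.Quotient.mk I (C (a j)) •
            (Pi.single i 1 : Fin (d+1) → MvPolynomial (Fin d) A ⧸ I)
          - Ideal.Quotient.mk I (C (a i)) •
            (Pi.single j 1 : Fin (d+1) → MvPolynomial (Fin d) A ⧸ I))
          ∈ Submodule.span (MvPolynomial (Fin d) A ⧸ I) T := by
      intro i j
      have hid : Ideal.Quotient.mk I (C (a j)) •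
            (Pi.single i 1 : Fin (d+1) → MvPolynomial (Fin d) A ⧸ I)
            - Ideal.Quotient.mk I (C (a i)) •
            (Pi.single j 1 : Fin (d+1) → MvPolynomial (Fin d) A ⧸ I)
          = (Ideal.Quotient.mk I (C (a (Fin.last d))) * xb j) • τ i
            - (Ideal.Quotient.mk I (C (a (Fin.last d))) * xb i) • τ j := by
        rw [hax i, hax j, hτdef]
        module
      rw [hid]
      exact sub_mem (Submodule.smul_mem _ _ (hτ i)) (Submodule.smul_mem _ _ (hτ j))
    have hPF : quotMap I (d+1) F ∈ Submodule.span (MvPolynomial (Fin d) A ⧸ I) T := by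
      have h2 := Submodule.mem_map_of_mem (f := quotMap I (d+1)) hFloc
      rw [Submodule.map_span] at h2
      have h3 : Submodule.span (MvPolynomial (Fin d) A)
            (quotMap I (d+1) '' koszulSet (fun i : Fin (d+1) => (C (a i) : MvPolynomial (Fin d) A)))
          ≤ Submodule.restrictScalars (MvPolynomial (Fin d) A)
              (Submodule.span (MvPolynomial (Fin d) A ⧸ I) T) := by
        rw [Submodule.span_le]
        rintro _ ⟨_, ⟨p, rfl⟩, rfl⟩
        have heq : quotMap I (d+1)
              ((C (a p.2) : MvPolynomial (Fin d) A) •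
                 (Pi.single p.1 1 : Fin (d+1) → MvPolynomial (Fin d) A) -
               (C (a p.1) : MvPolynomial (Fin d) A) •
                 (Pi.single p.2 1 : Fin (d+1) → MvPolynomial (Fin d) A))
            = Ideal.Quotient.mk I (C (a p.2)) •
                (Pi.single p.1 1 : Fin (d+1) → MvPolynomial (Fin d) A ⧸ I)
              - Ideal.Quotient.mk I (C (a p.1)) •
                (Pi.single p.2 1 : Fin (d+1) → MvPolynomial (Fin d) A ⧸ I) := by
          rw [map_sub, map_smul, map_smul, quotMap_single, quotMap_single]
          congr 1
        exact heq ▸ hκ p.1 p.2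
      exact h3 h2
    have hveq : v = quotMap I (d+1) F + ∑ j : Fin d, (Ideal.Quotient.mk I (g j)) •
        ((Pi.single j.castSucc 1 : Fin (d+1) → MvPolynomial (Fin d) A ⧸ I) -
          Ideal.Quotient.mk I (X j) •
            (Pi.single (Fin.last d) 1 : Fin (d+1) → MvPolynomial (Fin d) A ⧸ I)) := by
      funext i
      refine Fin.lastCases ?_ (fun k => ?_) i
      · simp only [Pi.add_apply, Finset.sum_apply, Pi.smul_apply, Pi.sub_apply,
          quotMap_apply, hFdef, Fin.snoc_last]
        have h5 : ∀ j : Fin d,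
            (Pi.single j.castSucc (1 : MvPolynomial (Fin d) A ⧸ I) :
              Fin (d+1) → MvPolynomial (Fin d) A ⧸ I) (Fin.last d) = 0 :=
          fun j => Pi.single_eq_of_ne (Fin.castSucc_lt_last j).ne' _
        simp only [h5, Pi.single_eq_same, smul_eq_mul, mul_zero, zero_sub, mul_one, mul_neg,
          Finset.sum_neg_distrib]
        rw [← hf, map_add, map_sum]
        simp only [map_mul, mul_neg]
        rw [add_assoc, ← Finset.sum_add_distrib]
        rw [Finset.sum_eq_zero fun x _ => by ring, add_zero]
      · simp only [Pi.add_apply, Finset.sum_apply, Pi.smul_apply, Pi.sub_apply,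
          quotMap_apply, hFdef, Fin.snoc_castSucc]
        have h5 : (Pi.single (Fin.last d) (1 : MvPolynomial (Fin d) A ⧸ I) :
            Fin (d+1) → MvPolynomial (Fin d) A ⧸ I) k.castSucc = 0 :=
          Pi.single_eq_of_ne (Fin.castSucc_lt_last k).ne _
        have h6 : ∀ j : Fin d, (Pi.single j.castSucc (1 : MvPolynomial (Fin d) A ⧸ I) :
            Fin (d+1) → MvPolynomial (Fin d) A ⧸ I) k.castSucc
            = if k = j then 1 else 0 := fun j => by
          rw [Pi.single_apply]
          simp [Fin.castSucc_inj, eq_comm]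
        simp only [h5, h6, smul_eq_mul, mul_zero, sub_zero, mul_ite, mul_one,
          Finset.sum_ite_eq, Finset.mem_univ, if_true]
        rw [← hf, map_sub]
        ring
    rw [hveq]
    exact Submodule.add_mem _ hPF (Submodule.sum_mem _ fun j _ =>
      Submodule.smul_mem _ _ (Submodule.subset_span ⟨j, rfl⟩))
  · -- span ⊆ ker
    rw [Submodule.span_le]
    rintro _ ⟨j, rfl⟩
    rw [SetLike.mem_coe, LinearMap.mem_ker, Fintype.linearCombination_apply]
    have h5 : ∀ i : Fin (d+1),
        ((Pi.single j.castSucc 1 : Fin (d + 1) → MvPolynomial (Fin d) A ⧸ I) -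
          Ideal.Quotient.mk I (X j) •
            (Pi.single (Fin.last d) 1 : Fin (d + 1) → MvPolynomial (Fin d) A ⧸ I)) i
        = (if i = j.castSucc then 1 else 0)
          - Ideal.Quotient.mk I (X j) * (if i = Fin.last d then 1 else 0) := by
      intro i
      simp [Pi.single_apply]
    simp only [h5, sub_smul, smul_eq_mul, ite_mul, one_mul, zero_mul, mul_ite, mul_zero,
      Finset.sum_sub_distrib, Finset.sum_ite_eq', Finset.mem_univ, if_true]
    simp only [sub_mul, ite_mul, one_mul, zero_mul, mul_one,
      Finset.sum_sub_distrib, Finset.sum_ite_eq', Finset.mem_univ, if_true]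
    rw [← map_mul, ← map_sub, Ideal.Quotient.eq_zero_iff_mem, hI]
    have : C (a j.castSucc) - (X j * C (a (Fin.last d)))
        = C (a j.castSucc) - C (a (Fin.last d)) * X j := by ring
    rw [this]
    exact Ideal.subset_span ⟨j, rfl⟩
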